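/- A square nonnegative matrix A is nonnegatively regularizable (i.e., there exists r > 0 and an r-bistochastic matrix W whose nonzero pattern is contained in that of A) if and only if A has support (i.e., there exists a permutation matrix P whose nonzero pattern is contained in that of A). -/

import Mathlib

open Matrix BigOperators

/-- `P` is a permutation matrix. -/
def IsPermMatrix {n : ℕ} (P : Matrix (Fin n) (Fin n) ℝ) : Prop :=
  ∃ σ : Equiv.Perm (Fin n), ∀ i j, P i j = if σ i = j then 1 else 0

/-- The nonzero pattern of `W` is contained in that of `A`. -/
def SubPat {n : ℕ} (W A : Matrix (Fin n) (Fin n) ℝ) : Prop :=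
  ∀ i j, W i j ≠ 0 → A i j ≠ 0

/-- `W` is a nonnegative matrix with all row sums and column sums equal to `r`. -/
def IsBistochastic {n : ℕ} (W : Matrix (Fin n) (Fin n) ℝ) (r : ℝ) : Prop :=
  (∀ i j, 0 ≤ W i j) ∧ (∀ i, ∑ j, W i j = r) ∧ (∀ j, ∑ i, W i j = r)

/-- A square nonnegative matrix is nonnegatively regularizable iff it has support. -/
theorem nonnegatively_regularizable_iff_support {n : ℕ}
    (A : Matrix (Fin n) (Fin n) ℝ) (hA : ∀ i j, 0 ≤ A i j) :
    (∃ r : ℝ, 0 < r ∧ ∃ W : Matrix (Fin n) (Fin n) ℝ, IsBistochastic W r ∧ SubPat W A) ↔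
      (∃ P : Matrix (Fin n) (Fin n) ℝ, IsPermMatrix P ∧ SubPat P A) := by
  constructor
  · rintro ⟨r, hr, W, ⟨hWnn, hrow, hcol⟩, hsub⟩
    have hM : r⁻¹ • W ∈ doublyStochastic ℝ (Fin n) := by
      rw [mem_doublyStochastic_iff_sum]
      refine ⟨fun i j => by
        simpa using mul_nonneg (inv_nonneg.mpr hr.le) (hWnn i j), fun i => ?_, fun j => ?_⟩
      · simp only [Matrix.smul_apply, smul_eq_mul, ← Finset.mul_sum, hrow]
        field_simp
      · simp only [Matrix.smul_apply, smul_eq_mul, ← Finset.mul_sum, hcol]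
        field_simp
    obtain ⟨w, hw0, hw1, hw2⟩ := exists_eq_sum_perm_of_mem_doublyStochastic hM
    have hex : ∃ σ, 0 < w σ := by
      by_contra h
      push_neg at h
      have : ∑ σ, w σ = 0 := Finset.sum_eq_zero fun σ _ => le_antisymm (h σ) (hw0 σ)
      rw [hw1] at this
      exact one_ne_zero this
    obtain ⟨σ, hσ⟩ := hex
    refine ⟨σ.permMatrix ℝ, ⟨σ, fun i j => ?_⟩, fun i j hne => ?_⟩
    · simp [Equiv.Perm.permMatrix, PEquiv.toMatrix_apply, Equiv.toPEquiv_apply]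
    · have hij : σ i = j := by
        by_contra h
        exact hne (by simp [Equiv.Perm.permMatrix, PEquiv.toMatrix_apply,
          Equiv.toPEquiv_apply, h])
      apply hsub i j
      have hterm : ∀ τ : Equiv.Perm (Fin n), 0 ≤ (w τ • τ.permMatrix ℝ) i j := by
        intro τ
        simp only [Matrix.smul_apply, smul_eq_mul, Equiv.Perm.permMatrix, PEquiv.toMatrix_apply,
          Equiv.toPEquiv_apply, Option.mem_def, Option.some.injEq]
        split <;> simp [hw0 τ]
      have hle : w σ ≤ (r⁻¹ • W) i j := by
        rw [← hw2]
        have h1 : (∑ τ : Equiv.Perm (Fin n), w τ • τ.permMatrix ℝ) i j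
            = ∑ τ : Equiv.Perm (Fin n), (w τ • τ.permMatrix ℝ) i j := by
          simp [Matrix.sum_apply]
        rw [h1]
        have h2 : (w σ • σ.permMatrix ℝ) i j = w σ := by
          simp [Equiv.Perm.permMatrix, PEquiv.toMatrix_apply, Equiv.toPEquiv_apply, hij]
        calc w σ = (w σ • σ.permMatrix ℝ) i j := h2.symm
          _ ≤ _ := Finset.single_le_sum (fun τ _ => hterm τ) (Finset.mem_univ σ)
      have hWpos : 0 < W i j := by
        have : 0 < (r⁻¹ • W) i j := lt_of_lt_of_le hσ hle
        simp only [Matrix.smul_apply, smul_eq_mul] at this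
        nlinarith [inv_pos.mpr hr]
      exact hWpos.ne'
  · rintro ⟨P, ⟨σ, hP⟩, hsub⟩
    refine ⟨1, one_pos, P, ⟨fun i j => ?_, fun i => ?_, fun j => ?_⟩, hsub⟩
    · rw [hP]; split <;> norm_num
    · simp [hP]
    · have : ∀ j i, P i j = if i = σ.symm j then 1 else 0 := by
        intro j i
        rw [hP]
        congr 1
        simp [Equiv.eq_symm_apply, eq_comm]
      simp [this]
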